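/- Let G be a countable group, f strictly convex with f(1)=0, λ a generating probability measure on G, and X an ergodic quasi-invariant G-space. Then the entropy function h_{λ,f} is strictly convex on the set of measures ν (in the fixed measure class) with h_{λ,f}(ν) < ∞; in particular there is at most one measure in that class attaining the infimum I_{λ,f}(X). -/

import Mathlib

open MeasureTheory

/-- The `f`-divergence `D_f(η‖m)`, valued in `[0,∞]`. -/
noncomputable def fDivE {X : Type*} [MeasurableSpace X] (f : ℝ → ℝ)
    (η m : Measure X) : ENNReal :=
  ∫⁻ x, ENNReal.ofReal (f ((η.rnDeriv m x).toReal)) ∂m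

/-- The Furstenberg `(λ,f)`-entropy `h_{λ,f}(ν) = Σ_g λ(g)·D_f(g⁻¹ν‖ν)`. -/
noncomputable def fEntropy {G X : Type*} [Group G] [MeasurableSpace X]
    [MulAction G X] (f : ℝ → ℝ) (lam : G → ℝ) (ν : Measure X) : ENNReal :=
  ∑' g : G, ENNReal.ofReal (lam g) * fDivE f (ν.map (fun x => g⁻¹ • x)) ν


open scoped ENNReal

section Aux

variable {X : Type*} [MeasurableSpace X]

lemma exists_measurable_ext {f : ℝ → ℝ} (hf : ContinuousOn f (Set.Ioi (0:ℝ))) :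
    ∃ F : ℝ → ℝ, Measurable F ∧ ∀ x : ℝ, 0 < x → F x = f x := by
  refine ⟨(f ∘ Real.exp) ∘ Real.log, ?_, fun x hx => by
    simp [Function.comp, Real.exp_log hx]⟩
  have hc : Continuous (f ∘ Real.exp) :=
    hf.comp_continuous Real.continuous_exp fun x => Set.mem_Ioi.2 (Real.exp_pos x)
  exact hc.measurable.comp Real.measurable_log

lemma isFiniteMeasure_smul (μ : Measure X) [IsFiniteMeasure μ] {c : ℝ≥0∞} (hc : c ≠ ⊤) :
    IsFiniteMeasure (c • μ) := by
  constructor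
  rw [Measure.smul_apply, smul_eq_mul]
  exact ENNReal.mul_lt_top hc.lt_top (measure_lt_top μ _)

lemma absCont_smul_add_left (μ ν : Measure X) {a b : ℝ≥0∞} (ha : a ≠ 0) :
    μ ≪ a • μ + b • ν := by
  intro s hs
  simp only [Measure.add_apply, Measure.smul_apply, smul_eq_mul, add_eq_zero] at hs
  exact (mul_eq_zero.1 hs.1).resolve_left ha

lemma absCont_smul_add_right (μ ν : Measure X) {a b : ℝ≥0∞} (hb : b ≠ 0) :
    ν ≪ a • μ + b • ν := by
  intro s hs
  simp only [Measure.add_apply, Measure.smul_apply, smul_eq_mul, add_eq_zero] at hs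
  exact (mul_eq_zero.1 hs.2).resolve_left hb

lemma smul_add_absCont {μ ν κ : Measure X} {a b : ℝ≥0∞} (hμ : μ ≪ κ) (hν : ν ≪ κ) :
    a • μ + b • ν ≪ κ := by
  intro s hs
  simp [Measure.add_apply, Measure.smul_apply, smul_eq_mul, hμ hs, hν hs]

lemma fDivE_mix {f : ℝ → ℝ} (hf : StrictConvexOn ℝ (Set.Ioi (0:ℝ)) f)
    (hfpos : ∀ x ∈ Set.Ioi (0:ℝ), 0 ≤ f x)
    (η₀ η₁ m₀ m₁ : Measure X) [IsFiniteMeasure η₀] [IsFiniteMeasure η₁]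
    [IsFiniteMeasure m₀] [IsFiniteMeasure m₁]
    (hη₀ : η₀ ≪ m₀) (hm₀ : m₀ ≪ η₀) (hη₁ : η₁ ≪ m₁) (hm₁ : m₁ ≪ η₁)
    (h01 : m₀ ≪ m₁) (h10 : m₁ ≪ m₀)
    {t : ℝ} (ht0 : 0 < t) (ht1 : t < 1) :
    fDivE f (ENNReal.ofReal (1 - t) • η₀ + ENNReal.ofReal t • η₁)
        (ENNReal.ofReal (1 - t) • m₀ + ENNReal.ofReal t • m₁)
      ≤ ENNReal.ofReal (1 - t) * fDivE f η₀ m₀ + ENNReal.ofReal t * fDivE f η₁ m₁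
    ∧ (fDivE f η₀ m₀ ≠ ⊤ → fDivE f η₁ m₁ ≠ ⊤ →
       ¬ (η₀.rnDeriv m₀ =ᵐ[m₀] η₁.rnDeriv m₁) →
       fDivE f (ENNReal.ofReal (1 - t) • η₀ + ENNReal.ofReal t • η₁)
          (ENNReal.ofReal (1 - t) • m₀ + ENNReal.ofReal t • m₁)
         < ENNReal.ofReal (1 - t) * fDivE f η₀ m₀ + ENNReal.ofReal t * fDivE f η₁ m₁) := by
  obtain ⟨F, hFmeas, hFeq⟩ := exists_measurable_ext (hf.convexOn.continuousOn isOpen_Ioi)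
  set a := ENNReal.ofReal (1 - t) with ha_def
  set b := ENNReal.ofReal t with hb_def
  have ha0 : a ≠ 0 := by simp [ha_def, ENNReal.ofReal_eq_zero]; linarith
  have hb0 : b ≠ 0 := by simp [hb_def, ENNReal.ofReal_eq_zero]; linarith
  have haT : a ≠ ⊤ := ENNReal.ofReal_ne_top
  have hbT : b ≠ ⊤ := ENNReal.ofReal_ne_top
  set m : Measure X := a • m₀ + b • m₁ with hm_def
  set η : Measure X := a • η₀ + b • η₁ with hη_def
  haveI : IsFiniteMeasure (a • m₀) := isFiniteMeasure_smul m₀ haT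
  haveI : IsFiniteMeasure (b • m₁) := isFiniteMeasure_smul m₁ hbT
  haveI : IsFiniteMeasure (a • η₀) := isFiniteMeasure_smul η₀ haT
  haveI : IsFiniteMeasure (b • η₁) := isFiniteMeasure_smul η₁ hbT
  haveI : IsFiniteMeasure m := by rw [hm_def]; infer_instance
  haveI : IsFiniteMeasure η := by rw [hη_def]; infer_instance
  -- absolute continuity facts
  have hm₀m : m₀ ≪ m := absCont_smul_add_left m₀ m₁ ha0
  have hm₁m : m₁ ≪ m := absCont_smul_add_right m₀ m₁ hb0
  have hmm₀ : m ≪ m₀ := smul_add_absCont (Measure.AbsolutelyContinuous.refl m₀) h10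
  have hmm₁ : m ≪ m₁ := smul_add_absCont h01 (Measure.AbsolutelyContinuous.refl m₁)
  have hmη₀ : m ≪ η₀ := hmm₀.trans hm₀
  have hmη₁ : m ≪ η₁ := hmm₁.trans hm₁
  -- Radon-Nikodym identities
  set w₀ : X → ℝ≥0∞ := m₀.rnDeriv m with hw₀_def
  set w₁ : X → ℝ≥0∞ := m₁.rnDeriv m with hw₁_def
  set r₀ : X → ℝ≥0∞ := η₀.rnDeriv m₀ with hr₀_def
  set r₁ : X → ℝ≥0∞ := η₁.rnDeriv m₁ with hr₁_def
  have hsum : ∀ᵐ x ∂m, a * w₀ x + b * w₁ x = 1 := by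
    have h1 : m.rnDeriv m =ᵐ[m] fun _ => 1 := Measure.rnDeriv_self m
    have h2 : m.rnDeriv m =ᵐ[m] (a • m₀).rnDeriv m + (b • m₁).rnDeriv m := by
      rw [hm_def]; exact Measure.rnDeriv_add' _ _ _
    have h3 : (a • m₀).rnDeriv m =ᵐ[m] a • m₀.rnDeriv m :=
      Measure.rnDeriv_smul_left_of_ne_top m₀ m haT
    have h4 : (b • m₁).rnDeriv m =ᵐ[m] b • m₁.rnDeriv m :=
      Measure.rnDeriv_smul_left_of_ne_top m₁ m hbT
    filter_upwards [h1, h2, h3, h4] with x e1 e2 e3 e4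
    have := e2.symm.trans e1
    rw [Pi.add_apply, e3, e4] at this
    simpa [smul_eq_mul] using this
  have hηrep : η.rnDeriv m =ᵐ[m] fun x => a * (r₀ x * w₀ x) + b * (r₁ x * w₁ x) := by
    have h2 : η.rnDeriv m =ᵐ[m] (a • η₀).rnDeriv m + (b • η₁).rnDeriv m := by
      rw [hη_def]; exact Measure.rnDeriv_add' _ _ _
    have h3 : (a • η₀).rnDeriv m =ᵐ[m] a • η₀.rnDeriv m :=
      Measure.rnDeriv_smul_left_of_ne_top η₀ m haT
    have h4 : (b • η₁).rnDeriv m =ᵐ[m] b • η₁.rnDeriv m :=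
      Measure.rnDeriv_smul_left_of_ne_top η₁ m hbT
    have h5 : r₀ * w₀ =ᵐ[m] η₀.rnDeriv m := Measure.rnDeriv_mul_rnDeriv hη₀
    have h6 : r₁ * w₁ =ᵐ[m] η₁.rnDeriv m := Measure.rnDeriv_mul_rnDeriv hη₁
    filter_upwards [h2, h3, h4, h5, h6] with x e2 e3 e4 e5 e6
    rw [e2, Pi.add_apply, e3, e4, Pi.smul_apply, Pi.smul_apply, ← e5, ← e6]
    simp [smul_eq_mul]
  have hw₀pos : ∀ᵐ x ∂m, 0 < w₀ x :=
    (Measure.rnDeriv_pos hm₀m).filter_mono hmm₀.ae_le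
  have hw₁pos : ∀ᵐ x ∂m, 0 < w₁ x :=
    (Measure.rnDeriv_pos hm₁m).filter_mono hmm₁.ae_le
  have hw₀fin : ∀ᵐ x ∂m, w₀ x ≠ ⊤ := Measure.rnDeriv_ne_top m₀ m
  have hw₁fin : ∀ᵐ x ∂m, w₁ x ≠ ⊤ := Measure.rnDeriv_ne_top m₁ m
  have hr₀pos : ∀ᵐ x ∂m, 0 < r₀ x :=
    (Measure.rnDeriv_pos hη₀).filter_mono hmη₀.ae_le
  have hr₁pos : ∀ᵐ x ∂m, 0 < r₁ x :=
    (Measure.rnDeriv_pos hη₁).filter_mono hmη₁.ae_le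
  have hr₀fin : ∀ᵐ x ∂m, r₀ x ≠ ⊤ :=
    (Measure.rnDeriv_ne_top η₀ m₀).filter_mono hmm₀.ae_le
  have hr₁fin : ∀ᵐ x ∂m, r₁ x ≠ ⊤ :=
    (Measure.rnDeriv_ne_top η₁ m₁).filter_mono hmm₁.ae_le
  -- the RHS integrand
  set R : X → ℝ≥0∞ := fun x =>
    a * w₀ x * ENNReal.ofReal (f ((r₀ x).toReal))
      + b * w₁ x * ENNReal.ofReal (f ((r₁ x).toReal)) with hR_def
  have hφ₀meas : AEMeasurable (fun x => ENNReal.ofReal (f ((r₀ x).toReal))) m := by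
    refine AEMeasurable.congr (f := fun x => ENNReal.ofReal (F ((r₀ x).toReal))) ?_ ?_
    · exact (ENNReal.measurable_ofReal.comp
        (hFmeas.comp ((Measure.measurable_rnDeriv η₀ m₀).ennreal_toReal))).aemeasurable
    · filter_upwards [hr₀pos, hr₀fin] with x h1 h2
      rw [hFeq _ (ENNReal.toReal_pos h1.ne' h2)]
  have hφ₁meas : AEMeasurable (fun x => ENNReal.ofReal (f ((r₁ x).toReal))) m := by
    refine AEMeasurable.congr (f := fun x => ENNReal.ofReal (F ((r₁ x).toReal))) ?_ ?_
    · exact (ENNReal.measurable_ofReal.comp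
        (hFmeas.comp ((Measure.measurable_rnDeriv η₁ m₁).ennreal_toReal))).aemeasurable
    · filter_upwards [hr₁pos, hr₁fin] with x h1 h2
      rw [hFeq _ (ENNReal.toReal_pos h1.ne' h2)]
  have hRmeas : AEMeasurable R m := by
    refine AEMeasurable.add ?_ ?_
    · exact (((Measure.measurable_rnDeriv m₀ m).const_mul a).aemeasurable.mul hφ₀meas)
    · exact (((Measure.measurable_rnDeriv m₁ m).const_mul b).aemeasurable.mul hφ₁meas)
  -- pointwise inequality
  have hpt : ∀ᵐ x ∂m,
      ENNReal.ofReal (f ((η.rnDeriv m x).toReal)) ≤ R x ∧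
      (r₀ x ≠ r₁ x → ENNReal.ofReal (f ((η.rnDeriv m x).toReal)) < R x) := by
    filter_upwards [hsum, hηrep, hw₀pos, hw₁pos, hw₀fin, hw₁fin, hr₀pos, hr₁pos,
      hr₀fin, hr₁fin] with x e1 e2 p0 p1 f0 f1 q0 q1 g0 g1
    set α := (a * w₀ x).toReal with hα_def
    set β := (b * w₁ x).toReal with hβ_def
    have haw : a * w₀ x ≠ ⊤ := ENNReal.mul_ne_top haT f0
    have hbw : b * w₁ x ≠ ⊤ := ENNReal.mul_ne_top hbT f1
    have hαβ : α + β = 1 := by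
      rw [hα_def, hβ_def, ← ENNReal.toReal_add haw hbw, e1]; simp
    have hα : 0 < α :=
      ENNReal.toReal_pos (mul_ne_zero ha0 p0.ne') haw
    have hβ : 0 < β :=
      ENNReal.toReal_pos (mul_ne_zero hb0 p1.ne') hbw
    set u := (r₀ x).toReal with hu_def
    set v := (r₁ x).toReal with hv_def
    have hu : 0 < u := ENNReal.toReal_pos q0.ne' g0
    have hv : 0 < v := ENNReal.toReal_pos q1.ne' g1
    have hfin1 : a * (r₀ x * w₀ x) ≠ ⊤ := ENNReal.mul_ne_top haT (ENNReal.mul_ne_top g0 f0)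
    have hfin2 : b * (r₁ x * w₁ x) ≠ ⊤ := ENNReal.mul_ne_top hbT (ENNReal.mul_ne_top g1 f1)
    have harg : (η.rnDeriv m x).toReal = α * u + β * v := by
      rw [e2, ENNReal.toReal_add hfin1 hfin2, ENNReal.toReal_mul, ENNReal.toReal_mul,
        ENNReal.toReal_mul, ENNReal.toReal_mul, hα_def, hβ_def,
        ENNReal.toReal_mul, ENNReal.toReal_mul]
      ring
    have hmix_pos : 0 < α * u + β * v := by positivity
    have hineq : f (α * u + β * v) ≤ α * f u + β * f v := by
      have := hf.convexOn.2 (Set.mem_Ioi.2 hu) (Set.mem_Ioi.2 hv) hα.le hβ.le hαβ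
      simpa [smul_eq_mul] using this
    have hnn0 : 0 ≤ α * f u := mul_nonneg hα.le (hfpos u (Set.mem_Ioi.2 hu))
    have hnn1 : 0 ≤ β * f v := mul_nonneg hβ.le (hfpos v (Set.mem_Ioi.2 hv))
    have e₀ : ENNReal.ofReal (α * f u) = a * w₀ x * ENNReal.ofReal (f u) := by
      rw [ENNReal.ofReal_mul hα.le, hα_def, ENNReal.ofReal_toReal haw]
    have e₁ : ENNReal.ofReal (β * f v) = b * w₁ x * ENNReal.ofReal (f v) := by
      rw [ENNReal.ofReal_mul hβ.le, hβ_def, ENNReal.ofReal_toReal hbw]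
    have hRx : R x = ENNReal.ofReal (α * f u + β * f v) := by
      simp only [hR_def]
      rw [ENNReal.ofReal_add hnn0 hnn1, e₀, e₁]
    constructor
    · rw [harg, hRx]
      exact ENNReal.ofReal_le_ofReal hineq
    · intro hne
      have huv : u ≠ v := fun h => hne ((ENNReal.toReal_eq_toReal_iff' g0 g1).1 h)
      have hstrict : f (α * u + β * v) < α * f u + β * f v := by
        have := hf.2 (Set.mem_Ioi.2 hu) (Set.mem_Ioi.2 hv) huv hα hβ hαβ
        simpa [smul_eq_mul] using this
      rw [harg, hRx]
      exact (ENNReal.ofReal_lt_ofReal_iff_of_nonneg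
        (hfpos _ (Set.mem_Ioi.2 hmix_pos))).2 hstrict
  -- integral of the RHS
  have hRint : ∫⁻ x, R x ∂m = a * fDivE f η₀ m₀ + b * fDivE f η₁ m₁ := by
    have h1 : ∫⁻ x, R x ∂m
        = (∫⁻ x, a * w₀ x * ENNReal.ofReal (f ((r₀ x).toReal)) ∂m)
          + ∫⁻ x, b * w₁ x * ENNReal.ofReal (f ((r₁ x).toReal)) ∂m := by
      simp only [hR_def]
      exact lintegral_add_left'
        (((Measure.measurable_rnDeriv m₀ m).const_mul a).aemeasurable.mul hφ₀meas) _
    have h2 : ∫⁻ x, a * w₀ x * ENNReal.ofReal (f ((r₀ x).toReal)) ∂m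
        = a * fDivE f η₀ m₀ := by
      calc ∫⁻ x, a * w₀ x * ENNReal.ofReal (f ((r₀ x).toReal)) ∂m
          = a * ∫⁻ x, w₀ x * ENNReal.ofReal (f ((r₀ x).toReal)) ∂m := by
            simp_rw [mul_assoc]; exact lintegral_const_mul' a _ haT
        _ = a * ∫⁻ x, ENNReal.ofReal (f ((r₀ x).toReal)) ∂m₀ := by
            rw [MeasureTheory.lintegral_rnDeriv_mul hm₀m hφ₀meas]
        _ = a * fDivE f η₀ m₀ := rfl
    have h3 : ∫⁻ x, b * w₁ x * ENNReal.ofReal (f ((r₁ x).toReal)) ∂m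
        = b * fDivE f η₁ m₁ := by
      calc ∫⁻ x, b * w₁ x * ENNReal.ofReal (f ((r₁ x).toReal)) ∂m
          = b * ∫⁻ x, w₁ x * ENNReal.ofReal (f ((r₁ x).toReal)) ∂m := by
            simp_rw [mul_assoc]; exact lintegral_const_mul' b _ hbT
        _ = b * ∫⁻ x, ENNReal.ofReal (f ((r₁ x).toReal)) ∂m₁ := by
            rw [MeasureTheory.lintegral_rnDeriv_mul hm₁m hφ₁meas]
        _ = b * fDivE f η₁ m₁ := rfl
    rw [h1, h2, h3]
  have hle : fDivE f η m ≤ ∫⁻ x, R x ∂m :=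
    lintegral_mono_ae (hpt.mono fun x h => h.1)
  constructor
  · exact hRint ▸ hle
  · intro hfin₀ hfin₁ hne
    have hRfin : ∫⁻ x, R x ∂m ≠ ⊤ := by
      rw [hRint]
      exact ENNReal.add_ne_top.2
        ⟨ENNReal.mul_ne_top haT hfin₀, ENNReal.mul_ne_top hbT hfin₁⟩
    have hlhs_fin : ∫⁻ x, ENNReal.ofReal (f ((η.rnDeriv m x).toReal)) ∂m ≠ ⊤ :=
      ne_top_of_le_ne_top hRfin hle
    have hne_m : ¬ (r₀ =ᵐ[m] r₁) := fun h => hne (h.filter_mono hm₀m.ae_le)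
    have hfreq : ∃ᵐ x ∂m, r₀ x ≠ r₁ x := Filter.not_eventually.1 hne_m
    have hfreq' : ∃ᵐ x ∂m,
        ENNReal.ofReal (f ((η.rnDeriv m x).toReal)) ≠ R x :=
      (hfreq.and_eventually hpt).mono fun x hx => (hx.2.2 hx.1).ne
    have hlt := lintegral_strict_mono_of_ae_le_of_frequently_ae_lt hRmeas hlhs_fin
      (hpt.mono fun x h => h.1) hfreq'
    exact hRint ▸ hlt

end Aux

section Erg

variable {G X : Type*} [Group G] [Countable G] [MeasurableSpace G]
    [MeasurableSpace X] [MulAction G X] [MeasurableSMul G X]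
    (ν : Measure X) [IsProbabilityMeasure ν]

lemma null_or_conull
    (hqi : ∀ g : G, ν.map (fun x => g • x) ≪ ν ∧ ν ≪ ν.map (fun x => g • x))
    (herg : ∀ s : Set X, MeasurableSet s →
      (∀ g : G, (fun x => g • x) ⁻¹' s = s) → ν s = 0 ∨ ν sᶜ = 0)
    (A : Set X) (hA : MeasurableSet A)
    (hinv : ∀ g : G, ((fun x => g • x) ⁻¹' A : Set X) =ᵐ[ν] A) :
    ν A = 0 ∨ ν Aᶜ = 0 := by
  set B : Set X := ⋂ g : G, (fun x => g • x) ⁻¹' A with hB_def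
  have hBmeas : MeasurableSet B :=
    MeasurableSet.iInter fun g => (measurable_const_smul g) hA
  have hBsub : B ⊆ A := by
    intro x hx
    have := Set.mem_iInter.1 hx (1 : G)
    simpa using this
  have hBinv : ∀ g : G, (fun x => g • x) ⁻¹' B = B := by
    intro g
    ext x
    simp only [hB_def, Set.mem_iInter, Set.mem_preimage]
    constructor
    · intro H h
      have := H (h * g⁻¹)
      simpa [smul_smul, mul_assoc] using this
    · intro H h
      have := H (h * g)
      simpa [smul_smul] using this
  have hdiff : ν (A \ B) = 0 := by
    have hsub : A \ B ⊆ ⋃ g : G, (A \ (fun x => g • x) ⁻¹' A) := by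
      intro x hx
      rcases hx with ⟨hxA, hxB⟩
      rw [hB_def, Set.mem_iInter] at hxB
      push_neg at hxB
      obtain ⟨g, hg⟩ := hxB
      exact Set.mem_iUnion.2 ⟨g, hxA, hg⟩
    refine measure_mono_null hsub (measure_iUnion_null fun g => ?_)
    have := (MeasureTheory.ae_eq_set.1 (hinv g)).2
    exact this
  rcases herg B hBmeas hBinv with h | h
  · left
    have : ν A ≤ ν B + ν (A \ B) := by
      calc ν A ≤ ν (B ∪ (A \ B)) := measure_mono (fun x hx => by
            by_cases hB : x ∈ B
            · exact Or.inl hB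
            · exact Or.inr ⟨hx, hB⟩)
        _ ≤ ν B + ν (A \ B) := measure_union_le _ _
    rw [h, hdiff] at this
    simpa using this
  · right
    have : ν Aᶜ ≤ ν Bᶜ := measure_mono (Set.compl_subset_compl.2 hBsub)
    rw [h] at this
    simpa using this

end Erg

section Erg2

variable {G X : Type*} [Group G] [Countable G] [MeasurableSpace G]
    [MeasurableSpace X] [MulAction G X] [MeasurableSMul G X]
    (ν : Measure X) [IsProbabilityMeasure ν]


lemma measurableSet_ne_fun {u v : X → ℝ≥0∞} (hu : Measurable u) (hv : Measurable v) :
    MeasurableSet {x | ¬ u x = v x} := by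
  have : {x | ¬ u x = v x} = {x | u x < v x} ∪ {x | v x < u x} := by
    ext x; simp [eq_comm, lt_or_lt_iff_ne, ne_comm, Ne]
  rw [this]
  exact (measurableSet_lt hu hv).union (measurableSet_lt hv hu)

lemma eq_of_rnDeriv_eq
    (lam : G → ℝ)
    (hgen : Subgroup.closure {g : G | lam g ≠ 0} = ⊤)
    (hqi : ∀ g : G, ν.map (fun x => g • x) ≪ ν ∧ ν ≪ ν.map (fun x => g • x))
    (herg : ∀ s : Set X, MeasurableSet s →
      (∀ g : G, (fun x => g • x) ⁻¹' s = s) → ν s = 0 ∨ ν sᶜ = 0)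
    (ν₀ ν₁ : Measure X) [IsProbabilityMeasure ν₀] [IsProbabilityMeasure ν₁]
    (h₀ν : ν₀ ≪ ν) (hνν₀ : ν ≪ ν₀) (h₁ν : ν₁ ≪ ν) (hνν₁ : ν ≪ ν₁)
    (heq : ∀ g : G, lam g ≠ 0 →
      (ν₀.map (fun x => g⁻¹ • x)).rnDeriv ν₀ =ᵐ[ν₀]
        (ν₁.map (fun x => g⁻¹ • x)).rnDeriv ν₁) :
    ν₀ = ν₁ := by
  set φ : X → ℝ≥0∞ := ν₁.rnDeriv ν₀ with hφ_def
  have hφmeas : Measurable φ := Measure.measurable_rnDeriv ν₁ ν₀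
  have hν₁ν₀ : ν₁ ≪ ν₀ := h₁ν.trans hνν₀
  have hν₀ν₁ : ν₀ ≪ ν₁ := h₀ν.trans hνν₁
  have htrans : ∀ (g : G) (N : Set X), MeasurableSet N → ν N = 0 →
      ν ((fun x => g • x) ⁻¹' N) = 0 := by
    intro g N hN h0
    have h1 : ν.map (fun x => g • x) N = 0 := (hqi g).1 h0
    rwa [Measure.map_apply (measurable_const_smul g) hN] at h1
  let S : Subgroup G :=
  { carrier := {g : G | (fun x => φ (g • x)) =ᵐ[ν] φ}
    one_mem' := by simp
    mul_mem' := by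
      intro g h hg hh
      have hN : MeasurableSet {y : X | ¬ φ (g • y) = φ y} :=
        measurableSet_ne_fun (hφmeas.comp (measurable_const_smul g)) hφmeas
      have h1 : ν ((fun x => h • x) ⁻¹' {y : X | ¬ φ (g • y) = φ y}) = 0 :=
        htrans h _ hN (ae_iff.1 hg)
      have h2 : ∀ᵐ x ∂ν, φ (g • (h • x)) = φ (h • x) := ae_iff.2 h1
      show (fun x => φ ((g * h) • x)) =ᵐ[ν] φ
      filter_upwards [h2, hh] with x e1 e2
      rw [mul_smul, e1]
      exact e2
    inv_mem' := by
      intro g hg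
      have hN : MeasurableSet {y : X | ¬ φ (g • y) = φ y} :=
        measurableSet_ne_fun (hφmeas.comp (measurable_const_smul g)) hφmeas
      have h1 : ν ((fun x => g⁻¹ • x) ⁻¹' {y : X | ¬ φ (g • y) = φ y}) = 0 :=
        htrans g⁻¹ _ hN (ae_iff.1 hg)
      have h2 : ∀ᵐ x ∂ν, φ (g • (g⁻¹ • x)) = φ (g⁻¹ • x) := ae_iff.2 h1
      show (fun x => φ (g⁻¹ • x)) =ᵐ[ν] φ
      filter_upwards [h2] with x e1
      have e2 := e1.symm
      rw [smul_inv_smul] at e2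
      exact e2 }
  have hgenS : ∀ g : G, lam g ≠ 0 → g⁻¹ ∈ S := by
    intro g hg
    set T : X → X := fun x => g⁻¹ • x with hT_def
    have hTmeas : Measurable T := measurable_const_smul g⁻¹
    have hTemb : MeasurableEmbedding T := measurableEmbedding_const_smul g⁻¹
    have hmapν : ν.map T ≪ ν := (hqi g⁻¹).1
    have hνmap : ν ≪ ν.map T := (hqi g⁻¹).2
    have h₀T : ν₀.map T ≪ ν₀ := ((h₀ν.map hTmeas).trans hmapν).trans hνν₀
    have h₀T' : ν₀ ≪ ν₀.map T := (h₀ν.trans hνmap).trans (hνν₀.map hTmeas)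
    have h₁T : ν₁.map T ≪ ν₁ := ((h₁ν.map hTmeas).trans hmapν).trans hνν₁
    have h₁₀T : ν₁.map T ≪ ν₀.map T := hν₁ν₀.map hTmeas
    haveI : IsFiniteMeasure (ν₀.map T) := Measure.isFiniteMeasure_map ν₀ T
    haveI : IsFiniteMeasure (ν₁.map T) := Measure.isFiniteMeasure_map ν₁ T
    set A : X → ℝ≥0∞ := (ν₁.map T).rnDeriv (ν₀.map T) with hA_def
    set B : X → ℝ≥0∞ := (ν₀.map T).rnDeriv ν₀ with hB_def
    set D : X → ℝ≥0∞ := (ν₁.map T).rnDeriv ν₁ with hD_def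
    have hAB : A * B =ᵐ[ν₀] (ν₁.map T).rnDeriv ν₀ := Measure.rnDeriv_mul_rnDeriv h₁₀T
    have hDK : D * φ =ᵐ[ν₀] (ν₁.map T).rnDeriv ν₀ := Measure.rnDeriv_mul_rnDeriv h₁T
    have hBD : B =ᵐ[ν₀] D := heq g hg
    have hBpos : ∀ᵐ x ∂ν₀, 0 < B x := (Measure.rnDeriv_pos h₀T).filter_mono h₀T'.ae_le
    have hBfin : ∀ᵐ x ∂ν₀, B x ≠ ⊤ := Measure.rnDeriv_ne_top _ _
    have hAK : A =ᵐ[ν₀] φ := by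
      filter_upwards [hAB, hDK, hBD, hBpos, hBfin] with x e1 e2 e3 p fin
      have h' : A x * B x = φ x * B x := by
        rw [Pi.mul_apply] at e1 e2
        rw [e1, ← e2, e3]
        ring
      calc A x = A x * B x * (B x)⁻¹ := by
            rw [mul_assoc, ENNReal.mul_inv_cancel p.ne' fin, mul_one]
        _ = φ x * B x * (B x)⁻¹ := by rw [h']
        _ = φ x := by rw [mul_assoc, ENNReal.mul_inv_cancel p.ne' fin, mul_one]
    have hmap : (fun x => A (T x)) =ᵐ[ν₀] φ := hTemb.rnDeriv_map ν₁ ν₀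
    have hNmeas : MeasurableSet {x | ¬ A x = φ x} :=
      measurableSet_ne_fun (Measure.measurable_rnDeriv _ _) hφmeas
    have h0 : ν {x | ¬ A x = φ x} = 0 := hνν₀ (ae_iff.1 hAK)
    have h1 : ν ((fun x => g⁻¹ • x) ⁻¹' {x | ¬ A x = φ x}) = 0 := htrans g⁻¹ _ hNmeas h0
    have h2 : ∀ᵐ x ∂ν, A (T x) = φ (T x) := ae_iff.2 h1
    have h3 : ∀ᵐ x ∂ν, A (T x) = φ x := hmap.filter_mono hνν₀.ae_le
    show (fun x => φ (g⁻¹ • x)) =ᵐ[ν] φ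
    filter_upwards [h2, h3] with x e1 e2
    exact e1.symm.trans e2
  have hS_top : ∀ g : G, (fun x => φ (g • x)) =ᵐ[ν] φ := by
    have h1 : Subgroup.closure {g : G | lam g ≠ 0} ≤ S :=
      (Subgroup.closure_le S).2 (fun g hg => by
        have h2 := S.inv_mem (hgenS g hg)
        rwa [inv_inv] at h2)
    rw [hgen] at h1
    exact fun g => h1 (Subgroup.mem_top g)
  have hlt : ν {x | φ x < 1} = 0 := by
    have hmeas : MeasurableSet {x | φ x < 1} := measurableSet_lt hφmeas measurable_const
    have hinv : ∀ g : G, ((fun x => g • x) ⁻¹' {x | φ x < 1} : Set X) =ᵐ[ν] {x | φ x < 1} := by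
      intro g
      rw [Filter.eventuallyEq_set]
      filter_upwards [hS_top g] with x hx
      simp only [Set.mem_preimage, Set.mem_setOf_eq]
      rw [hx]
    rcases null_or_conull ν hqi herg _ hmeas hinv with h | h
    · exact h
    · exfalso
      have hφae : ∀ᵐ x ∂ν₀, φ x < 1 := by
        have hae : ∀ᵐ x ∂ν, φ x < 1 := by
          rw [ae_iff]
          simpa [Set.compl_setOf, not_lt] using h
        exact hae.filter_mono h₀ν.ae_le
      have hint : ∫⁻ x, φ x ∂ν₀ = 1 := by
        rw [Measure.lintegral_rnDeriv hν₁ν₀]; simp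
      have hstrict : (∫⁻ x, φ x ∂ν₀) < ∫⁻ _, 1 ∂ν₀ :=
        lintegral_strict_mono (IsProbabilityMeasure.ne_zero ν₀)
          measurable_const.aemeasurable (by rw [hint]; exact ENNReal.one_ne_top) hφae
      rw [hint, lintegral_one, measure_univ] at hstrict
      exact lt_irrefl _ hstrict
  have hgt : ν {x | 1 < φ x} = 0 := by
    have hmeas : MeasurableSet {x | 1 < φ x} := measurableSet_lt measurable_const hφmeas
    have hinv : ∀ g : G, ((fun x => g • x) ⁻¹' {x | 1 < φ x} : Set X) =ᵐ[ν] {x | 1 < φ x} := by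
      intro g
      rw [Filter.eventuallyEq_set]
      filter_upwards [hS_top g] with x hx
      simp only [Set.mem_preimage, Set.mem_setOf_eq]
      rw [hx]
    rcases null_or_conull ν hqi herg _ hmeas hinv with h | h
    · exact h
    · exfalso
      have hφae : ∀ᵐ x ∂ν₀, 1 < φ x := by
        have hae : ∀ᵐ x ∂ν, 1 < φ x := by
          rw [ae_iff]
          simpa [Set.compl_setOf, not_lt] using h
        exact hae.filter_mono h₀ν.ae_le
      have hint : ∫⁻ x, φ x ∂ν₀ = 1 := by
        rw [Measure.lintegral_rnDeriv hν₁ν₀]; simp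
      have hstrict : (∫⁻ _, 1 ∂ν₀) < ∫⁻ x, φ x ∂ν₀ :=
        lintegral_strict_mono (IsProbabilityMeasure.ne_zero ν₀)
          hφmeas.aemeasurable (by rw [lintegral_one, measure_univ]; exact ENNReal.one_ne_top)
          hφae
      rw [hint, lintegral_one, measure_univ] at hstrict
      exact lt_irrefl _ hstrict
  have hφ1 : φ =ᵐ[ν₀] fun _ => 1 := by
    have h1 : ∀ᵐ x ∂ν, ¬ φ x < 1 := by
      rw [ae_iff]
      simpa using hlt
    have h2 : ∀ᵐ x ∂ν, ¬ 1 < φ x := by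
      rw [ae_iff]
      simpa using hgt
    have h3 := (h1.and h2).filter_mono h₀ν.ae_le
    filter_upwards [h3] with x hx
    exact le_antisymm (not_lt.1 hx.2) (not_lt.1 hx.1)
  have hwd : ν₀.withDensity φ = ν₁ := Measure.withDensity_rnDeriv_eq ν₁ ν₀ hν₁ν₀
  rw [← hwd, withDensity_congr_ae hφ1]
  exact (withDensity_one (μ := ν₀)).symm

end Erg2

section Mix

variable {X : Type*} [MeasurableSpace X]

lemma isProbability_mix (μ₀ μ₁ : Measure X) [IsProbabilityMeasure μ₀]
    [IsProbabilityMeasure μ₁] {t : ℝ} (ht0 : 0 ≤ t) (ht1 : t ≤ 1) :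
    IsProbabilityMeasure (ENNReal.ofReal (1 - t) • μ₀ + ENNReal.ofReal t • μ₁) := by
  constructor
  simp only [Measure.add_apply, Measure.smul_apply, smul_eq_mul, measure_univ, mul_one]
  rw [← ENNReal.ofReal_add (by linarith) ht0]
  norm_num

end Mix

/-- For a strictly convex `f` with `f 1 = 0`, a generating probability measure
`λ` on a countable group `G`, and an ergodic quasi-invariant `G`-space `(X,ν)`,
the entropy `h_{λ,f}` is strictly convex on the measures of the class of `ν`
with finite entropy; in particular at most one measure in the class attains
the infimum `I_{λ,f}(X)`. -/
theorem entropy_strictly_convex {G X : Type*} [Group G] [Countable G]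
    [MeasurableSpace G] [MeasurableSingletonClass G]
    [MeasurableSpace X] [MulAction G X] [MeasurableSMul G X]
    (f : ℝ → ℝ) (hf : StrictConvexOn ℝ (Set.Ioi (0:ℝ)) f) (hf1 : f 1 = 0)
    (hfpos : ∀ x ∈ Set.Ioi (0:ℝ), 0 ≤ f x)
    (lam : G → ℝ) (hlam0 : ∀ g, 0 ≤ lam g) (hlam1 : ∑' g, lam g = 1)
    (hgen : Subgroup.closure {g : G | lam g ≠ 0} = ⊤)
    (ν : Measure X) [IsProbabilityMeasure ν]
    (hqi : ∀ g : G, ν.map (fun x => g • x) ≪ ν ∧ ν ≪ ν.map (fun x => g • x))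
    (herg : ∀ s : Set X, MeasurableSet s →
      (∀ g : G, (fun x => g • x) ⁻¹' s = s) → ν s = 0 ∨ ν sᶜ = 0) :
    (∀ ν₀ ν₁ : Measure X, IsProbabilityMeasure ν₀ → IsProbabilityMeasure ν₁ →
      ν₀ ≪ ν → ν ≪ ν₀ → ν₁ ≪ ν → ν ≪ ν₁ → ν₀ ≠ ν₁ →
      fEntropy f lam ν₀ ≠ ⊤ → fEntropy f lam ν₁ ≠ ⊤ →
      ∀ t : ℝ, 0 < t → t < 1 →
        fEntropy f lam ((ENNReal.ofReal (1 - t)) • ν₀ + (ENNReal.ofReal t) • ν₁)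
          < (ENNReal.ofReal (1 - t)) * fEntropy f lam ν₀
            + (ENNReal.ofReal t) * fEntropy f lam ν₁)
    ∧ ∀ m₀ m₁ : Measure X, IsProbabilityMeasure m₀ → IsProbabilityMeasure m₁ →
        m₀ ≪ ν → ν ≪ m₀ → m₁ ≪ ν → ν ≪ m₁ →
        fEntropy f lam m₀ ≠ ⊤ → fEntropy f lam m₁ ≠ ⊤ →
        fEntropy f lam m₀ =
          (⨅ m : {m : Measure X // IsProbabilityMeasure m ∧ m ≪ ν ∧ ν ≪ m},
            fEntropy f lam (m : Measure X)) →
        fEntropy f lam m₁ =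
          (⨅ m : {m : Measure X // IsProbabilityMeasure m ∧ m ≪ ν ∧ ν ≪ m},
            fEntropy f lam (m : Measure X)) →
        m₀ = m₁ := by
  have part1 : ∀ ν₀ ν₁ : Measure X, IsProbabilityMeasure ν₀ → IsProbabilityMeasure ν₁ →
      ν₀ ≪ ν → ν ≪ ν₀ → ν₁ ≪ ν → ν ≪ ν₁ → ν₀ ≠ ν₁ →
      fEntropy f lam ν₀ ≠ ⊤ → fEntropy f lam ν₁ ≠ ⊤ →
      ∀ t : ℝ, 0 < t → t < 1 →
        fEntropy f lam ((ENNReal.ofReal (1 - t)) • ν₀ + (ENNReal.ofReal t) • ν₁)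
          < (ENNReal.ofReal (1 - t)) * fEntropy f lam ν₀
            + (ENNReal.ofReal t) * fEntropy f lam ν₁ := by
    intro ν₀ ν₁ hp₀ hp₁ h₀ν hνν₀ h₁ν hνν₁ hne h₀top h₁top t ht0 ht1
    haveI := hp₀; haveI := hp₁
    set a := ENNReal.ofReal (1 - t) with ha_def
    set b := ENNReal.ofReal t with hb_def
    have ha0 : a ≠ 0 := by simp [ha_def, ENNReal.ofReal_eq_zero]; linarith
    have hb0 : b ≠ 0 := by simp [hb_def, ENNReal.ofReal_eq_zero]; linarith
    have hν₀ν₁ : ν₀ ≪ ν₁ := h₀ν.trans hνν₁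
    have hν₁ν₀ : ν₁ ≪ ν₀ := h₁ν.trans hνν₀
    set νt : Measure X := a • ν₀ + b • ν₁ with hνt_def
    have hmap : ∀ g : G, νt.map (fun x => g⁻¹ • x)
        = a • (ν₀.map (fun x => g⁻¹ • x)) + b • (ν₁.map (fun x => g⁻¹ • x)) := by
      intro g
      rw [hνt_def, Measure.map_add _ _ (measurable_const_smul g⁻¹),
        Measure.map_smul, Measure.map_smul]
    -- per-group-element inequalities
    have hkey : ∀ g : G,
        (fDivE f (νt.map (fun x => g⁻¹ • x)) νt
          ≤ a * fDivE f (ν₀.map (fun x => g⁻¹ • x)) ν₀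
            + b * fDivE f (ν₁.map (fun x => g⁻¹ • x)) ν₁)
        ∧ (fDivE f (ν₀.map (fun x => g⁻¹ • x)) ν₀ ≠ ⊤ →
           fDivE f (ν₁.map (fun x => g⁻¹ • x)) ν₁ ≠ ⊤ →
           ¬ ((ν₀.map (fun x => g⁻¹ • x)).rnDeriv ν₀ =ᵐ[ν₀]
               (ν₁.map (fun x => g⁻¹ • x)).rnDeriv ν₁) →
           fDivE f (νt.map (fun x => g⁻¹ • x)) νt
             < a * fDivE f (ν₀.map (fun x => g⁻¹ • x)) ν₀
               + b * fDivE f (ν₁.map (fun x => g⁻¹ • x)) ν₁) := by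
      intro g
      have hTmeas : Measurable (fun x : X => g⁻¹ • x) := measurable_const_smul g⁻¹
      haveI : IsFiniteMeasure (ν₀.map (fun x : X => g⁻¹ • x)) :=
        Measure.isFiniteMeasure_map ν₀ _
      haveI : IsFiniteMeasure (ν₁.map (fun x : X => g⁻¹ • x)) :=
        Measure.isFiniteMeasure_map ν₁ _
      have hη₀ : ν₀.map (fun x : X => g⁻¹ • x) ≪ ν₀ :=
        ((h₀ν.map hTmeas).trans (hqi g⁻¹).1).trans hνν₀
      have hm₀ : ν₀ ≪ ν₀.map (fun x : X => g⁻¹ • x) :=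
        (h₀ν.trans (hqi g⁻¹).2).trans (hνν₀.map hTmeas)
      have hη₁ : ν₁.map (fun x : X => g⁻¹ • x) ≪ ν₁ :=
        ((h₁ν.map hTmeas).trans (hqi g⁻¹).1).trans hνν₁
      have hm₁ : ν₁ ≪ ν₁.map (fun x : X => g⁻¹ • x) :=
        (h₁ν.trans (hqi g⁻¹).2).trans (hνν₁.map hTmeas)
      have h := fDivE_mix hf hfpos (ν₀.map (fun x : X => g⁻¹ • x))
        (ν₁.map (fun x : X => g⁻¹ • x)) ν₀ ν₁ hη₀ hm₀ hη₁ hm₁ hν₀ν₁ hν₁ν₀ ht0 ht1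
      rw [← hmap g] at h
      exact h
    have hterm_le : ∀ g : G,
        ENNReal.ofReal (lam g) * fDivE f (νt.map (fun x => g⁻¹ • x)) νt
          ≤ ENNReal.ofReal (lam g) *
            (a * fDivE f (ν₀.map (fun x => g⁻¹ • x)) ν₀
              + b * fDivE f (ν₁.map (fun x => g⁻¹ • x)) ν₁) :=
      fun g => mul_le_mul_right (hkey g).1 _
    have hsum : ∑' g : G, ENNReal.ofReal (lam g) *
          (a * fDivE f (ν₀.map (fun x => g⁻¹ • x)) ν₀
            + b * fDivE f (ν₁.map (fun x => g⁻¹ • x)) ν₁)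
        = a * fEntropy f lam ν₀ + b * fEntropy f lam ν₁ := by
      have hcongr : ∀ g : G, ENNReal.ofReal (lam g) *
          (a * fDivE f (ν₀.map (fun x => g⁻¹ • x)) ν₀
            + b * fDivE f (ν₁.map (fun x => g⁻¹ • x)) ν₁)
          = a * (ENNReal.ofReal (lam g) * fDivE f (ν₀.map (fun x => g⁻¹ • x)) ν₀)
            + b * (ENNReal.ofReal (lam g) * fDivE f (ν₁.map (fun x => g⁻¹ • x)) ν₁) := by
        intro g; ring
      rw [tsum_congr hcongr, ENNReal.tsum_add, ENNReal.tsum_mul_left, ENNReal.tsum_mul_left]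
      rfl
    have hfin : a * fEntropy f lam ν₀ + b * fEntropy f lam ν₁ ≠ ⊤ :=
      ENNReal.add_ne_top.2 ⟨ENNReal.mul_ne_top ENNReal.ofReal_ne_top h₀top,
        ENNReal.mul_ne_top ENNReal.ofReal_ne_top h₁top⟩
    -- find a strict element
    have hex : ∃ g : G, lam g ≠ 0 ∧
        ¬ ((ν₀.map (fun x => g⁻¹ • x)).rnDeriv ν₀ =ᵐ[ν₀]
            (ν₁.map (fun x => g⁻¹ • x)).rnDeriv ν₁) := by
      by_contra hcon
      push_neg at hcon
      exact hne (eq_of_rnDeriv_eq ν lam hgen hqi herg ν₀ ν₁ h₀ν hνν₀ h₁ν hνν₁ hcon)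
    obtain ⟨g₀, hg₀, hner⟩ := hex
    have hl0 : ENNReal.ofReal (lam g₀) ≠ 0 := by
      simp only [ne_eq, ENNReal.ofReal_eq_zero, not_le]
      exact lt_of_le_of_ne (hlam0 g₀) (Ne.symm hg₀)
    have hD₀fin : fDivE f (ν₀.map (fun x => g₀⁻¹ • x)) ν₀ ≠ ⊤ := by
      intro hD
      have h1 := ENNReal.ne_top_of_tsum_ne_top h₀top g₀
      rw [hD, ENNReal.mul_top hl0] at h1
      exact h1 rfl
    have hD₁fin : fDivE f (ν₁.map (fun x => g₀⁻¹ • x)) ν₁ ≠ ⊤ := by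
      intro hD
      have h1 := ENNReal.ne_top_of_tsum_ne_top h₁top g₀
      rw [hD, ENNReal.mul_top hl0] at h1
      exact h1 rfl
    have hstrict : ENNReal.ofReal (lam g₀) * fDivE f (νt.map (fun x => g₀⁻¹ • x)) νt
        < ENNReal.ofReal (lam g₀) *
          (a * fDivE f (ν₀.map (fun x => g₀⁻¹ • x)) ν₀
            + b * fDivE f (ν₁.map (fun x => g₀⁻¹ • x)) ν₁) :=
      (ENNReal.mul_lt_mul_iff_right hl0 ENNReal.ofReal_ne_top).2
        ((hkey g₀).2 hD₀fin hD₁fin hner)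
    have hlhs_fin : ∑' g : G,
        ENNReal.ofReal (lam g) * fDivE f (νt.map (fun x => g⁻¹ • x)) νt ≠ ⊤ :=
      ne_top_of_le_ne_top (hsum ▸ hfin) (ENNReal.tsum_le_tsum hterm_le)
    calc fEntropy f lam νt
        = ∑' g : G, ENNReal.ofReal (lam g) * fDivE f (νt.map (fun x => g⁻¹ • x)) νt := rfl
      _ < ∑' g : G, ENNReal.ofReal (lam g) *
            (a * fDivE f (ν₀.map (fun x => g⁻¹ • x)) ν₀
              + b * fDivE f (ν₁.map (fun x => g⁻¹ • x)) ν₁) :=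
          ENNReal.tsum_lt_tsum hlhs_fin hterm_le hstrict
      _ = a * fEntropy f lam ν₀ + b * fEntropy f lam ν₁ := hsum
  refine ⟨part1, ?_⟩
  intro m₀ m₁ hp₀ hp₁ hm₀ν hνm₀ hm₁ν hνm₁ hfe₀ hfe₁ hmin₀ hmin₁
  haveI := hp₀; haveI := hp₁
  by_contra hne
  have h := part1 m₀ m₁ hp₀ hp₁ hm₀ν hνm₀ hm₁ν hνm₁ hne hfe₀ hfe₁ (1/2)
    (by norm_num) (by norm_num)
  set mix : Measure X := (ENNReal.ofReal (1 - 1/2)) • m₀ + (ENNReal.ofReal (1/2)) • m₁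
    with hmix_def
  haveI hmixprob : IsProbabilityMeasure mix :=
    isProbability_mix m₀ m₁ (by norm_num) (by norm_num)
  have hmixν : mix ≪ ν := smul_add_absCont hm₀ν hm₁ν
  have hνmix : ν ≪ mix := by
    refine hνm₀.trans (absCont_smul_add_left m₀ m₁ ?_)
    norm_num [ENNReal.ofReal_eq_zero]
  have hcomb : (ENNReal.ofReal (1 - 1/2)) * fEntropy f lam m₀
      + (ENNReal.ofReal (1/2)) * fEntropy f lam m₁
      = (⨅ m : {m : Measure X // IsProbabilityMeasure m ∧ m ≪ ν ∧ ν ≪ m},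
          fEntropy f lam (m : Measure X)) := by
    rw [hmin₀, hmin₁, ← add_mul, ← ENNReal.ofReal_add (by norm_num) (by norm_num)]
    norm_num
  rw [hcomb] at h
  have hle : (⨅ m : {m : Measure X // IsProbabilityMeasure m ∧ m ≪ ν ∧ ν ≪ m},
      fEntropy f lam (m : Measure X)) ≤ fEntropy f lam mix :=
    iInf_le (fun m : {m : Measure X // IsProbabilityMeasure m ∧ m ≪ ν ∧ ν ≪ m} =>
      fEntropy f lam (m : Measure X)) ⟨mix, hmixprob, hmixν, hνmix⟩
  exact absurd h (not_lt.2 hle)
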